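/- For the uniform-block covariance Σ(A,B,p) and z = (E_kk' + E_k'k) ∘ J(p) with k ≠ k', tr{(zΣ)²} = p_k² p_k'² (b_kk'² + b_k'k²) + 2 p_k p_k' (a_kk + p_k b_kk)(a_k'k' + p_k' b_k'k'). -/

import Mathlib

open Matrix

/-- `A ∘ I(p)`: block-diagonal matrix with `a k • I_{p k}` as `k`-th diagonal block. -/
noncomputable def blockI {K : ℕ} (p : Fin K → ℕ) (a : Fin K → ℝ) :
    Matrix ((k : Fin K) × Fin (p k)) ((k : Fin K) × Fin (p k)) ℝ :=
  Matrix.diagonal fun x => a x.1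

/-- `B ∘ J(p)`: block matrix whose `(k,k')` block is `B k k' • 1_{p k × p k'}`. -/
noncomputable def blockJ {K : ℕ} (p : Fin K → ℕ) (B : Matrix (Fin K) (Fin K) ℝ) :
    Matrix ((k : Fin K) × Fin (p k)) ((k : Fin K) × Fin (p k)) ℝ :=
  Matrix.of fun x y => B x.1 y.1



noncomputable def Pmat {K : ℕ} (p : Fin K → ℕ) :
    Matrix ((k : Fin K) × Fin (p k)) (Fin K) ℝ :=
  Matrix.of fun x i => if x.1 = i then 1 else 0

lemma blockJ_eq {K : ℕ} (p : Fin K → ℕ) (B : Matrix (Fin K) (Fin K) ℝ) :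
    blockJ p B = Pmat p * B * (Pmat p)ᵀ := by
  ext x y
  simp [blockJ, Pmat, Matrix.mul_apply, ite_mul, mul_ite, Finset.sum_ite_eq, Finset.sum_ite_eq']

lemma sigma_fst_sum {K : ℕ} (p : Fin K → ℕ) (f : Fin K → ℝ) :
    ∑ x : (l : Fin K) × Fin (p l), f x.1 = ∑ i, (p i : ℝ) * f i := by
  rw [← Finset.univ_sigma_univ, Finset.sum_sigma]
  simp [Finset.sum_const, nsmul_eq_mul]

lemma PtIP {K : ℕ} (p : Fin K → ℕ) (a : Fin K → ℝ) :
    (Pmat p)ᵀ * blockI p a * Pmat p = Matrix.diagonal (fun i => (p i : ℝ) * a i) := by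
  ext i j
  rw [Matrix.mul_assoc, Matrix.mul_apply]
  have h1 : (∑ x : (l : Fin K) × Fin (p l), (Pmat p)ᵀ i x * (blockI p a * Pmat p) x j)
      = ∑ x : (l : Fin K) × Fin (p l),
          (fun l => (if l = i then 1 else 0) * (a l * if l = j then 1 else 0)) x.1 :=
    Finset.sum_congr rfl fun x _ => by
      simp [Pmat, blockI, Matrix.diagonal_mul]
  rw [h1, sigma_fst_sum p (fun l => (if l = i then 1 else 0) * (a l * if l = j then 1 else 0))]
  simp only [ite_mul, one_mul, zero_mul, mul_ite, mul_one, mul_zero, Finset.sum_ite_eq',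
    Finset.mem_univ, if_true, Matrix.diagonal_apply]
  by_cases h : i = j <;> simp [h]
  exact fun h' => absurd h'.symm h

lemma PtP {K : ℕ} (p : Fin K → ℕ) :
    (Pmat p)ᵀ * Pmat p = Matrix.diagonal (fun i => (p i : ℝ)) := by
  have := PtIP p (fun _ => (1:ℝ))
  have hI : blockI p (fun _ => (1:ℝ)) = 1 := by
    ext x y
    simp [blockI, Matrix.diagonal_apply, Matrix.one_apply]
  rw [hI, Matrix.mul_one] at this
  simpa using this

lemma tr4 {K : ℕ} (C : Matrix (Fin K) (Fin K) ℝ) (i j l m : Fin K) :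
    Matrix.trace (Matrix.single i j (1:ℝ) * C * Matrix.single l m 1 * C)
      = C j l * C m i := by
  simp [Matrix.trace, Matrix.diag, Matrix.mul_apply, Matrix.single, ite_mul, mul_ite,
    ite_and, Finset.sum_ite_eq, Finset.sum_ite_eq', Finset.mul_sum, Finset.sum_mul, mul_comm]

/-- For `z = (E_kk' + E_k'k) ∘ J(p)` with `k ≠ k'` and `Σ = A ∘ I(p) + B ∘ J(p)`,
`tr{(zΣ)²} = p_k² p_k'² (b_kk'² + b_k'k²) + 2 p_k p_k' (a_kk + p_k b_kk)(a_k'k' + p_k' b_k'k')`. -/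
theorem trace_zSigma_sq {K : ℕ} (p : Fin K → ℕ) (hp : ∀ l, 1 < p l)
    (a : Fin K → ℝ) (B : Matrix (Fin K) (Fin K) ℝ) (hB : B.IsSymm)
    (k k' : Fin K) (hkk' : k ≠ k') :
    Matrix.trace
        ((blockJ p (Matrix.single k k' 1 + Matrix.single k' k 1)
            * (blockI p a + blockJ p B))
          * (blockJ p (Matrix.single k k' 1 + Matrix.single k' k 1)
              * (blockI p a + blockJ p B)))
      = (p k : ℝ) ^ 2 * (p k' : ℝ) ^ 2 * ((B k k') ^ 2 + (B k' k) ^ 2)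
        + 2 * (p k : ℝ) * (p k' : ℝ) * (a k + (p k : ℝ) * B k k)
            * (a k' + (p k' : ℝ) * B k' k') := by
  set E : Matrix (Fin K) (Fin K) ℝ :=
    Matrix.single k k' 1 + Matrix.single k' k 1 with hE
  set S : Matrix ((l : Fin K) × Fin (p l)) ((l : Fin K) × Fin (p l)) ℝ :=
    blockI p a + blockJ p B with hS
  set P := Pmat p with hP
  set C : Matrix (Fin K) (Fin K) ℝ := Pᵀ * S * P with hC
  have e0 : blockJ p E = P * E * Pᵀ := blockJ_eq p E
  have e1 : (blockJ p E * S) * (blockJ p E * S)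
      = P * ((E * C) * (E * (Pᵀ * S))) := by
    rw [e0, hC]; simp only [Matrix.mul_assoc]
  have e2 : ((E * C) * (E * (Pᵀ * S))) * P = (E * C) * (E * C) := by
    rw [hC]; simp only [Matrix.mul_assoc]
  rw [e1, Matrix.trace_mul_comm, e2]
  have hCval : C = Matrix.diagonal (fun i => (p i : ℝ) * a i)
      + Matrix.diagonal (fun i => (p i : ℝ)) * B * Matrix.diagonal (fun i => (p i : ℝ)) := by
    rw [hC, hS, Matrix.mul_add, Matrix.add_mul, PtIP, blockJ_eq]
    congr 1
    have : Pᵀ * (P * B * Pᵀ) * P = (Pᵀ * P) * B * (Pᵀ * P) := by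
      simp only [Matrix.mul_assoc]
    rw [this, PtP]
  have htr : Matrix.trace ((E * C) * (E * C))
      = C k' k * C k' k + C k' k' * C k k + C k k * C k' k' + C k k' * C k k' := by
    rw [hE]
    simp only [Matrix.add_mul, Matrix.mul_add, Matrix.trace_add, ← Matrix.mul_assoc]
    rw [tr4, tr4, tr4, tr4]
    ring
  rw [htr, hCval]
  simp only [Matrix.add_apply, Matrix.diagonal_apply, Matrix.diagonal_mul, Matrix.mul_diagonal,
    if_pos rfl, if_neg hkk', if_neg (Ne.symm hkk'), if_true]
  ring
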